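/- Let S, T, Z be closed subspaces of a complex Hilbert space H with Z ∔ S = H and Z ∔ T = H. Let E_{Z∥S}, E_{T∥Z}, E_{S∥Z} denote the continuous idempotents with range Z and kernel S, range T and kernel Z, and range S and kernel Z, respectively. Then the operator L := E_{Z∥S} + E_{T∥Z} E_{S∥Z} is invertible in B(H), satisfies L(Z) = Z, and L maps S bijectively onto T (in particular L(S) = T). -/

import Mathlib

/-- Let `S, T, Z` be closed subspaces of a complex Hilbert space with
`Z ∔ S = H` and `Z ∔ T = H`, and let `E₁ = E_{Z∥S}`, `E₂ = E_{T∥Z}`,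
`E₃ = E_{S∥Z}` be the continuous idempotents with the indicated ranges and
kernels.  Then `L = E₁ + E₂ E₃` is invertible, satisfies `L(Z) = Z`, and maps
`S` bijectively onto `T`. -/
theorem L_operator_invertible_maps_S_onto_T {H : Type*} [NormedAddCommGroup H]
    [InnerProductSpace ℂ H] [CompleteSpace H]
    (S T Z : Submodule ℂ H)
    (hS : IsClosed (S : Set H)) (hT : IsClosed (T : Set H)) (hZ : IsClosed (Z : Set H))
    (hZS : IsCompl Z S) (hZT : IsCompl Z T)
    (E₁ E₂ E₃ : H →L[ℂ] H)
    (h₁ : E₁ ∘L E₁ = E₁) (h₁r : LinearMap.range (E₁ : H →ₗ[ℂ] H) = Z) (h₁k : LinearMap.ker (E₁ : H →ₗ[ℂ] H) = S)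
    (h₂ : E₂ ∘L E₂ = E₂) (h₂r : LinearMap.range (E₂ : H →ₗ[ℂ] H) = T) (h₂k : LinearMap.ker (E₂ : H →ₗ[ℂ] H) = Z)
    (h₃ : E₃ ∘L E₃ = E₃) (h₃r : LinearMap.range (E₃ : H →ₗ[ℂ] H) = S) (h₃k : LinearMap.ker (E₃ : H →ₗ[ℂ] H) = Z) :
    IsUnit (E₁ + E₂ * E₃) ∧
    Submodule.map ((E₁ + E₂ * E₃ : H →L[ℂ] H) : H →ₗ[ℂ] H) Z = Z ∧
    Submodule.map ((E₁ + E₂ * E₃ : H →L[ℂ] H) : H →ₗ[ℂ] H) S = T ∧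
    Set.BijOn (E₁ + E₂ * E₃) (S : Set H) (T : Set H) := by
  set L : H →L[ℂ] H := E₁ + E₂ * E₃ with hLdef
  -- pointwise idempotency
  have p₁ : ∀ x, E₁ (E₁ x) = E₁ x := fun x => DFunLike.congr_fun h₁ x
  have p₂ : ∀ x, E₂ (E₂ x) = E₂ x := fun x => DFunLike.congr_fun h₂ x
  have p₃ : ∀ x, E₃ (E₃ x) = E₃ x := fun x => DFunLike.congr_fun h₃ x
  -- range/kernel facts
  have memZ₁ : ∀ x, E₁ x ∈ Z := fun x => h₁r ▸ LinearMap.mem_range_self _ x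
  have memT₂ : ∀ x, E₂ x ∈ T := fun x => h₂r ▸ LinearMap.mem_range_self _ x
  have fix₁ : ∀ x ∈ Z, E₁ x = x := by
    intro x hx
    rw [← h₁r] at hx
    obtain ⟨y, rfl⟩ := hx
    exact p₁ y
  have fix₃ : ∀ x ∈ S, E₃ x = x := by
    intro x hx
    rw [← h₃r] at hx
    obtain ⟨y, rfl⟩ := hx
    exact p₃ y
  have ker₁ : ∀ x ∈ S, E₁ x = 0 := by
    intro x hx; rw [← h₁k] at hx; exact hx
  have ker₂ : ∀ x ∈ Z, E₂ x = 0 := by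
    intro x hx; rw [← h₂k] at hx; exact hx
  have ker₃ : ∀ x ∈ Z, E₃ x = 0 := by
    intro x hx; rw [← h₃k] at hx; exact hx
  -- E₃ = 1 - E₁ pointwise
  have hE₃ : ∀ x, E₃ x = x - E₁ x := by
    intro x
    have hs : x - E₁ x ∈ S := by
      rw [← h₁k]
      simp [LinearMap.mem_ker, map_sub, p₁]
    calc E₃ x = E₃ ((x - E₁ x) + E₁ x) := by rw [sub_add_cancel]
      _ = E₃ (x - E₁ x) + E₃ (E₁ x) := map_add _ _ _
      _ = (x - E₁ x) + 0 := by rw [fix₃ _ hs, ker₃ _ (memZ₁ x)]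
      _ = x - E₁ x := add_zero _
  -- L x = E₁ x + E₂ x
  have hL : ∀ x, L x = E₁ x + E₂ x := by
    intro x
    have : E₂ (E₁ x) = 0 := ker₂ _ (memZ₁ x)
    simp only [hLdef, ContinuousLinearMap.add_apply, ContinuousLinearMap.mul_apply,
      hE₃, map_sub, this, sub_zero]
  -- injectivity
  have hinj : Function.Injective L := by
    intro x y hxy
    have hxy' : L (x - y) = 0 := by rw [map_sub, hxy, sub_self]
    rw [hL] at hxy'
    have h2 : E₂ (x - y) = 0 := by
      have := congrArg E₂ hxy'
      rw [map_add, map_zero, ker₂ _ (memZ₁ _), p₂, zero_add] at this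
      exact this
    have h1 : E₁ (x - y) = 0 := by rw [h2, add_zero] at hxy'; exact hxy'
    have hmem : x - y ∈ Z ⊓ S := ⟨h₂k ▸ h2, h₁k ▸ h1⟩
    rw [hZS.inf_eq_bot, Submodule.mem_bot] at hmem
    exact sub_eq_zero.mp hmem
  -- surjectivity
  have hsurj : Function.Surjective L := by
    intro y
    have hy : y ∈ Z ⊔ T := by rw [hZT.sup_eq_top]; trivial
    obtain ⟨z, hz, t, ht, rfl⟩ := Submodule.mem_sup.mp hy
    rw [← h₂r] at ht
    obtain ⟨s₀, rfl⟩ := ht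
    refine ⟨z + (s₀ - E₁ s₀), ?_⟩
    rw [hL]
    have hE₁ : E₁ (z + (s₀ - E₁ s₀)) = z := by
      rw [map_add, map_sub, p₁, sub_self, add_zero, fix₁ _ hz]
    have hE₂ : E₂ (z + (s₀ - E₁ s₀)) = E₂ s₀ := by
      rw [map_add, map_sub, ker₂ _ hz, ker₂ _ (memZ₁ s₀), zero_add, sub_zero]
    rw [hE₁, hE₂]; rfl
  -- invertibility
  have hker : LinearMap.ker (L : H →ₗ[ℂ] H) = ⊥ := LinearMap.ker_eq_bot.mpr hinj
  have hrange : LinearMap.range (L : H →ₗ[ℂ] H) = ⊤ := LinearMap.range_eq_top.mpr hsurj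
  let e := ContinuousLinearEquiv.ofBijective L hker hrange
  have he : ∀ x, e x = L x := fun x => rfl
  have hUnit : IsUnit L := by
    refine ⟨⟨L, (e.symm : H →L[ℂ] H), ?_, ?_⟩, rfl⟩
    · ext x
      have := e.apply_symm_apply x
      rw [he] at this
      simpa [ContinuousLinearMap.mul_apply] using this
    · ext x
      have := e.symm_apply_apply x
      rw [he] at this
      simpa [ContinuousLinearMap.mul_apply] using this
  -- L fixes Z
  have fixZ : ∀ x ∈ Z, L x = x := by
    intro x hx
    rw [hL, fix₁ _ hx, ker₂ _ hx, add_zero]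
  have hmapZ : Submodule.map (L : H →ₗ[ℂ] H) Z = Z := by
    apply le_antisymm
    · rintro _ ⟨x, hx, rfl⟩
      rw [ContinuousLinearMap.coe_coe, fixZ _ hx]; exact hx
    · intro x hx
      exact ⟨x, hx, fixZ _ hx⟩
  -- L maps S onto T
  have hLS : ∀ x ∈ S, L x = E₂ x := by
    intro x hx
    rw [hL, ker₁ _ hx, zero_add]
  have hmapS : Submodule.map (L : H →ₗ[ℂ] H) S = T := by
    apply le_antisymm
    · rintro _ ⟨x, hx, rfl⟩
      rw [ContinuousLinearMap.coe_coe, hLS _ hx]; exact memT₂ x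
    · intro t ht
      rw [← h₂r] at ht
      obtain ⟨s₀, rfl⟩ := ht
      have hs : s₀ - E₁ s₀ ∈ S := by
        rw [← h₁k]
        simp [LinearMap.mem_ker, map_sub, p₁]
      refine ⟨s₀ - E₁ s₀, hs, ?_⟩
      rw [ContinuousLinearMap.coe_coe, hLS _ hs, map_sub, ker₂ _ (memZ₁ s₀), sub_zero]; rfl
  refine ⟨hUnit, hmapZ, hmapS, ?_, ?_, ?_⟩
  · intro x hx
    have : L x ∈ Submodule.map (L : H →ₗ[ℂ] H) S := ⟨x, hx, rfl⟩
    rw [hmapS] at this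
    exact this
  · exact hinj.injOn
  · intro t ht
    have : t ∈ Submodule.map (L : H →ₗ[ℂ] H) S := hmapS ▸ ht
    obtain ⟨x, hx, rfl⟩ := this
    exact ⟨x, hx, rfl⟩
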